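/- Let B ⊇ A ⊆ Ã be C*-inclusions with A ⊆ B aperiodic and A ⊆ Ã anti-aperiodic, and let E : B → Ã be a generalised expectation. Then ker E is the largest aperiodic A-subbimodule of B. -/

import Mathlib

open scoped ComplexOrder ComplexInnerProductSpace
open Filter Topology

noncomputable section

section Hereditary

variable {A : Type*} [NonUnitalNormedRing A] [StarRing A] [Module ℂ A] [PartialOrder A]

/-- A hereditary subalgebra of a C*-algebra. -/
def IsHereditary (D : NonUnitalStarSubalgebra ℂ A) : Prop :=
  ∀ a d : A, d ∈ D → 0 ≤ a → a ≤ d → a ∈ D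

/-- A non-zero, closed, hereditary C*-subalgebra. -/
def NontrivClosedHereditary (D : NonUnitalStarSubalgebra ℂ A) : Prop :=
  IsClosed (D : Set A) ∧ (∃ d ∈ D, d ≠ 0) ∧ IsHereditary D

end Hereditary

section Incl

variable {A B : Type*}
  [NormedRing A] [StarRing A] [NormedAlgebra ℂ A] [PartialOrder A]
  [NormedRing B] [StarRing B] [NormedAlgebra ℂ B]

/-- Kishimoto's condition for an element of `B`, viewed as an `A`-bimodule via `j`. -/
def KishimotoElem (j : A →⋆ₐ[ℂ] B) (x : B) : Prop :=
  ∀ D : NonUnitalStarSubalgebra ℂ A, NontrivClosedHereditary D →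
    ∀ ε : ℝ, 0 < ε → ∃ a ∈ D, 0 ≤ a ∧ ‖a‖ = 1 ∧ ‖j a * x * j a‖ < ε

/-- Kishimoto's condition for an element of the quotient bimodule `B/A`. -/
def KishimotoQuot (j : A →⋆ₐ[ℂ] B) (x : B) : Prop :=
  ∀ D : NonUnitalStarSubalgebra ℂ A, NontrivClosedHereditary D →
    ∀ ε : ℝ, 0 < ε → ∃ a ∈ D, 0 ≤ a ∧ ‖a‖ = 1 ∧ ∃ y : A, ‖j a * x * j a - j y‖ < ε

/-- The C*-inclusion `j : A → B` is aperiodic if the Banach `A`-bimodule `B/A`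
is aperiodic. -/
def AperiodicInclusion (j : A →⋆ₐ[ℂ] B) : Prop := ∀ x : B, KishimotoQuot j x

/-- An `A`-subbimodule of `B` (with `B` an `A`-bimodule via `j`). -/
def IsSubBimodule (j : A →⋆ₐ[ℂ] B) (S : Submodule ℂ B) : Prop :=
  ∀ a : A, ∀ x ∈ S, j a * x ∈ S ∧ x * j a ∈ S

/-- The inclusion `j : A → B` is anti-aperiodic: `B` contains no non-zero aperiodic
`A`-subbimodule. -/
def AntiAperiodic (j : A →⋆ₐ[ℂ] B) : Prop :=
  ∀ S : Submodule ℂ B, IsSubBimodule j S → (∀ x ∈ S, KishimotoElem j x) → S = ⊥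

end Incl

section CCP

variable {B C : Type*}
  [NormedRing B] [StarRing B] [NormedAlgebra ℂ B]
  [NormedRing C] [StarRing C] [NormedAlgebra ℂ C] [PartialOrder C]

/-- A completely positive contraction between C*-algebras. -/
def IsCCP (T : B →ₗ[ℂ] C) : Prop :=
  (∀ b, ‖T b‖ ≤ ‖b‖) ∧
  ∀ (n : ℕ) (b : Fin n → B) (c : Fin n → C),
    0 ≤ ∑ i, ∑ k, star (c i) * T (star (b i) * b k) * c k

end CCP

/-- A generalised expectation for the inclusion `ι : A → B`, relative to the
inclusion `j : A → C`: a completely positive contraction restricting to the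
identity on `A`. -/
def IsGenExpectation {A B C : Type*}
    [NormedRing A] [StarRing A] [NormedAlgebra ℂ A]
    [NormedRing B] [StarRing B] [NormedAlgebra ℂ B]
    [NormedRing C] [StarRing C] [NormedAlgebra ℂ C] [PartialOrder C]
    (ι : A →⋆ₐ[ℂ] B) (j : A →⋆ₐ[ℂ] C) (E : B →ₗ[ℂ] C) : Prop :=
  IsCCP E ∧ ∀ a : A, E (ι a) = j a


section AuxCP

set_option linter.unusedSectionVars false

variable {B C : Type*}
  [NormedRing B] [StarRing B] [CStarRing B] [NormedAlgebra ℂ B]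
  [StarModule ℂ B] [PartialOrder B] [StarOrderedRing B] [CompleteSpace B]
  [NormedRing C] [StarRing C] [CStarRing C] [NormedAlgebra ℂ C]
  [StarModule ℂ C] [PartialOrder C] [StarOrderedRing C] [CompleteSpace C]
  {E : B →ₗ[ℂ] C}

private lemma E_sq_nonneg (hE : IsCCP E) (z : B) : 0 ≤ E (star z * z) := by
  have h := hE.2 1 ![z] ![1]
  simpa using h

private lemma E_sa (hE : IsCCP E) {h : B} (hh : IsSelfAdjoint h) :
    IsSelfAdjoint (E h) := by
  have key : E h = (4:ℂ)⁻¹ • (E (star (1+h) * (1+h)) - E (star (1-h) * (1-h))) := by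
    rw [← map_sub, ← map_smul]
    congr 1
    simp only [star_add, star_sub, star_one, hh.star_eq]
    have : (1+h)*(1+h) - (1-h)*(1-h) = h+h+h+h := by noncomm_ring
    rw [this]; module
  rw [key]
  have h1 : IsSelfAdjoint (E (star (1+h) * (1+h))) :=
    .of_nonneg (E_sq_nonneg hE _)
  have h2 : IsSelfAdjoint (E (star (1-h) * (1-h))) :=
    .of_nonneg (E_sq_nonneg hE _)
  have h3 : IsSelfAdjoint ((4:ℂ)⁻¹) := by
    rw [IsSelfAdjoint, Complex.star_def, map_inv₀]
    norm_num [Complex.conj_ofNat]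
  exact h3.smul (h1.sub h2)

private lemma E_star (hE : IsCCP E) (x : B) : E (star x) = star (E x) := by
  obtain ⟨h, k, hh, hk, hx1, hx2⟩ :
      ∃ h k : B, IsSelfAdjoint h ∧ IsSelfAdjoint k ∧ x = h + Complex.I • k ∧
        star x = h - Complex.I • k := by
    have hIk : Complex.I • (-((2:ℂ)⁻¹ * Complex.I) • (x - star x))
        = (2:ℂ)⁻¹ • (x - star x) := by
      rw [smul_smul]
      congr 1
      linear_combination (-(2:ℂ)⁻¹) * Complex.I_mul_I
    refine ⟨(2:ℂ)⁻¹ • (x + star x), -((2:ℂ)⁻¹ * Complex.I) • (x - star x), ?_, ?_, ?_, ?_⟩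
    · rw [IsSelfAdjoint, star_smul, star_add, star_star, Complex.star_def, map_inv₀]
      norm_num [Complex.conj_ofNat, add_comm]
    · rw [IsSelfAdjoint, star_smul, star_sub, star_star, star_neg, star_mul',
        Complex.star_def, map_inv₀, Complex.conj_I, Complex.conj_ofNat]
      module
    · rw [hIk]; module
    · rw [hIk]; module
  have e1 : E (star x) = E h - Complex.I • E k := by rw [hx2, map_sub, map_smul]
  have e2 : star (E x) = E h - Complex.I • E k := by
    rw [hx1, map_add, map_smul, star_add, star_smul, (E_sa hE hh).star_eq,
      (E_sa hE hk).star_eq, Complex.star_def, Complex.conj_I, neg_smul, ← sub_eq_add_neg]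
  rw [e1, e2]

private lemma E_one_le_one (hE : IsCCP E) : E (1:B) ≤ 1 := by
  have h0 : 0 ≤ E (1:B) := by simpa using E_sq_nonneg hE 1
  by_cases hB : Subsingleton B
  · have h1 : (1:B) = 0 := Subsingleton.elim _ _
    rw [h1, map_zero]
    simpa using star_mul_self_nonneg (1:C)
  · have : Nontrivial B := not_subsingleton_iff_nontrivial.mp hB
    have hn : ‖E (1:B)‖ ≤ 1 := by
      calc ‖E (1:B)‖ ≤ ‖(1:B)‖ := hE.1 1
      _ = 1 := norm_one
    letI : CStarAlgebra C := { ‹NormedRing C›, ‹StarRing C›, ‹CStarRing C›,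
      ‹CompleteSpace C›, (inferInstance : NormedAlgebra ℂ C),
      (inferInstance : StarModule ℂ C) with }
    exact (CStarAlgebra.norm_le_one_iff_of_nonneg _ h0).mp hn

private lemma master (hE : IsCCP E) (x b : B) (c d : C) :
    0 ≤ star c * (E (star x * x) - star (E x) * E x) * c
      + star c * (E (star x * b) - star (E x) * E b) * d
      + star d * (E (star b * x) - star (E b) * E x) * c
      + star d * (E (star b * b) - star (E b) * E b) * d := by
  have h1sa : star (E (1:B)) = E (1:B) :=
    (IsSelfAdjoint.of_nonneg (by simpa using E_sq_nonneg hE 1)).star_eq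
  have h3 := hE.2 3 ![x, b, 1] ![c, d, -(E x * c + E b * d)]
  simp only [h1sa, Fin.sum_univ_three, Matrix.cons_val_zero, Matrix.cons_val_one,
    Matrix.head_cons, Matrix.cons_val_two, Matrix.tail_cons, star_one, one_mul,
    mul_one, E_star hE, h1sa] at h3
  have hw : 0 ≤ star (E x * c + E b * d) * (E x * c + E b * d)
      - star (E x * c + E b * d) * E (1:B) * (E x * c + E b * d) := by
    rw [sub_nonneg]
    have := star_left_conjugate_le_conjugate (E_one_le_one hE) (E x * c + E b * d)
    simpa using this
  have hres : star c * (E (star x * x) - star (E x) * E x) * c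
      + star c * (E (star x * b) - star (E x) * E b) * d
      + star d * (E (star b * x) - star (E b) * E x) * c
      + star d * (E (star b * b) - star (E b) * E b) * d
      = (star c * E (star x * x) * c
          + star c * E (star x * b) * d
          + star c * star (E x) * -(E x * c + E b * d)
          + (star d * E (star b * x) * c
            + star d * E (star b * b) * d
            + star d * star (E b) * -(E x * c + E b * d))
          + (star (-(E x * c + E b * d)) * E x * c
            + star (-(E x * c + E b * d)) * E b * d
            + star (-(E x * c + E b * d)) * E (1:B) * -(E x * c + E b * d)))
        + (star (E x * c + E b * d) * (E x * c + E b * d)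
          - star (E x * c + E b * d) * E (1:B) * (E x * c + E b * d)) := by
    simp only [star_neg, star_add, star_mul]
    noncomm_ring
  rw [hres]
  exact add_nonneg h3 hw

private lemma elim_zero {z r : C}
    (hz : ∀ c d : C, 0 ≤ star c * z * d + star d * star z * c + star d * r * d) :
    z = 0 := by
  letI : CStarAlgebra C := { ‹NormedRing C›, ‹StarRing C›, ‹CStarRing C›,
    ‹CompleteSpace C›, (inferInstance : NormedAlgebra ℂ C),
    (inferInstance : StarModule ℂ C) with }
  have hws : ∀ c d : C, star (star c * z * d) = star d * star z * c := by
    intro c d; simp [star_mul, star_star, mul_assoc]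
  have step1 : ∀ c d : C, star c * z * d + star (star c * z * d) = 0 := by
    intro c d
    have key : ∀ t : ℝ, 0 ≤ (t:ℂ) • (star c * z * d + star (star c * z * d))
        + star d * r * d := by
      intro t
      have h := hz ((t:ℂ) • c) d
      simp only [star_smul, Complex.star_def, Complex.conj_ofReal, smul_mul_assoc,
        mul_smul_comm] at h
      rw [hws, smul_add]
      convert h using 1
    by_contra hne
    set h0 : C := star c * z * d + star (star c * z * d) with hh0
    set rb : C := star d * r * d with hrb
    have hn0 : 0 < ‖h0‖ := norm_pos_iff.mpr hne
    set t : ℝ := (3 * ‖rb‖ + 1) / ‖h0‖ with htdef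
    have ht : 0 < t := by positivity
    have k1 := key t
    have k2 := key (-t)
    rw [Complex.ofReal_neg, neg_smul, ← sub_eq_neg_add, sub_nonneg] at k2
    have h1 : (t:ℂ) • h0 + rb ≤ rb + rb := add_le_add_left k2 rb
    have h3 : ‖(t:ℂ) • h0 + rb‖ ≤ ‖rb + rb‖ :=
      CStarAlgebra.norm_le_norm_of_nonneg_of_le k1 h1
    have h4 : ‖(t:ℂ) • h0‖ ≤ ‖(t:ℂ) • h0 + rb‖ + ‖rb‖ := by
      calc ‖(t:ℂ) • h0‖ = ‖((t:ℂ) • h0 + rb) - rb‖ := by rw [add_sub_cancel_right]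
      _ ≤ ‖(t:ℂ) • h0 + rb‖ + ‖rb‖ := norm_sub_le _ _
    have h5 : ‖(t:ℂ) • h0‖ = t * ‖h0‖ := by
      rw [norm_smul, Complex.norm_real, Real.norm_eq_abs, abs_of_pos ht]
    have h6 : ‖rb + rb‖ ≤ ‖rb‖ + ‖rb‖ := norm_add_le _ _
    have h7 : t * ‖h0‖ = 3 * ‖rb‖ + 1 := by
      rw [htdef, div_mul_cancel₀ _ (ne_of_gt hn0)]
    nlinarith [h3, h4, h5, h6, h7]
  have h4 : ∀ c d : C, star c * z * d = 0 := by
    intro c d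
    have hI := step1 (Complex.I • c) d
    have e1 : star (Complex.I • c) * z * d = -(Complex.I • (star c * z * d)) := by
      rw [star_smul, Complex.star_def, Complex.conj_I, neg_smul]
      simp [neg_mul, smul_mul_assoc]
    have hstar : star (star c * z * d) = -(star c * z * d) :=
      eq_neg_of_add_eq_zero_right (step1 c d)
    rw [e1, star_neg, star_smul, Complex.star_def, Complex.conj_I, hstar] at hI
    simp only [neg_smul, smul_neg, neg_neg] at hI
    rw [← neg_add, neg_eq_zero, ← two_smul ℂ, smul_smul] at hI
    rcases smul_eq_zero.mp hI with h | h
    · exact absurd h (by simp [Complex.I_ne_zero])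
    · exact h
  have := h4 1 1
  simpa using this

variable {A : Type*}
  [NormedRing A] [StarRing A] [CStarRing A] [NormedAlgebra ℂ A]
  [StarModule ℂ A] [PartialOrder A] [StarOrderedRing A] [CompleteSpace A]

private lemma E_bimod_left (ι : A →⋆ₐ[ℂ] B) (j : A →⋆ₐ[ℂ] C)
    (hE : IsCCP E) (hEι : ∀ a, E (ι a) = j a) (a : A) (b : B) :
    E (ι a * b) = j a * E b := by
  have f1 : star (ι (star a)) = ι a := by simp [← map_star]
  have f2 : star (j (star a)) = j a := by simp [← map_star]
  have hm := master hE (ι (star a)) b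
  have e0 : E (star (ι (star a)) * ι (star a)) - star (E (ι (star a))) * E (ι (star a))
      = 0 := by
    rw [f1, hEι, f2, ← map_mul, hEι, map_mul, sub_self]
  have e1 : E (star (ι (star a)) * b) - star (E (ι (star a))) * E b
      = E (ι a * b) - j a * E b := by
    rw [f1, hEι, f2]
  have e2 : E (star b * ι (star a)) - star (E b) * E (ι (star a))
      = star (E (ι a * b) - j a * E b) := by
    have g1 : star (E (ι a * b)) = E (star b * ι (star a)) := by
      rw [← E_star hE]
      congr 1
      rw [star_mul, ← map_star]
    have g2 : star (j a * E b) = star (E b) * E (ι (star a)) := by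
      rw [star_mul, hEι]
      congr 1
      exact (map_star j a).symm
    rw [star_sub, g1, g2]
  have hz : ∀ c d : C, 0 ≤ star c * (E (ι a * b) - j a * E b) * d
      + star d * star (E (ι a * b) - j a * E b) * c
      + star d * (E (star b * b) - star (E b) * E b) * d := by
    intro c d
    have h := hm c d
    rw [e0, e1, e2] at h
    simpa [add_assoc] using h
  have := elim_zero hz
  exact sub_eq_zero.mp this

private lemma E_bimod_right (ι : A →⋆ₐ[ℂ] B) (j : A →⋆ₐ[ℂ] C)
    (hE : IsCCP E) (hEι : ∀ a, E (ι a) = j a) (a : A) (b : B) :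
    E (b * ι a) = E b * j a := by
  have f1 : star (ι (star a)) = ι a := by simp [← map_star]
  have f2 : star (j (star a)) = j a := by simp [← map_star]
  have h := E_bimod_left ι j hE hEι (star a) (star b)
  have key : E (b * ι a) = star (E (ι (star a) * star b)) := by
    rw [← E_star hE]
    congr 1
    rw [star_mul, star_star, f1]
  rw [key, h, star_mul, f2, ← E_star hE, star_star]

end AuxCP

/-- if `A ⊆ B` is aperiodic and `A ⊆ Ã` is anti-aperiodic, then the kernel of
any generalised expectation `E : B → Ã` is the largest aperiodic `A`-subbimodule of `B`. -/
theorem ker_genExpectation_largest_aperiodic_subbimodule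
    {A B C : Type*} [NormedRing A] [StarRing A] [CStarRing A] [NormedAlgebra ℂ A]
    [StarModule ℂ A] [PartialOrder A] [StarOrderedRing A] [CompleteSpace A]
    [NormedRing B] [StarRing B] [CStarRing B] [NormedAlgebra ℂ B]
    [StarModule ℂ B] [PartialOrder B] [StarOrderedRing B] [CompleteSpace B]
    [NormedRing C] [StarRing C] [CStarRing C] [NormedAlgebra ℂ C]
    [StarModule ℂ C] [PartialOrder C] [StarOrderedRing C] [CompleteSpace C]
    (ι : A →⋆ₐ[ℂ] B) (hι : Isometry ι) (j : A →⋆ₐ[ℂ] C) (hj : Isometry j)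
    (hap : AperiodicInclusion ι) (hanti : AntiAperiodic j)
    (E : B →ₗ[ℂ] C) (hE : IsGenExpectation ι j E) :
    IsSubBimodule ι (LinearMap.ker E) ∧
    (∀ x : B, E x = 0 → KishimotoElem ι x) ∧
    (∀ S : Submodule ℂ B, IsSubBimodule ι S → (∀ x ∈ S, KishimotoElem ι x) →
      S ≤ LinearMap.ker E) := by
  obtain ⟨hCCP, hEι⟩ := hE
  have hbl : ∀ (a : A) (b : B), E (ι a * b) = j a * E b := E_bimod_left ι j hCCP hEι
  have hbr : ∀ (a : A) (b : B), E (b * ι a) = E b * j a := E_bimod_right ι j hCCP hEι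
  have hjnorm : ∀ y : A, ‖j y‖ = ‖y‖ := fun y => by
    simpa [dist_eq_norm] using hj.dist_eq y 0
  have hinorm : ∀ y : A, ‖ι y‖ = ‖y‖ := fun y => by
    simpa [dist_eq_norm] using hι.dist_eq y 0
  have hsand : ∀ (a : A) (x : B), E (ι a * x * ι a) = j a * E x * j a := by
    intro a x
    rw [mul_assoc, hbl, hbr, mul_assoc]
  refine ⟨?_, ?_, ?_⟩
  · -- ker E is a subbimodule
    intro a x hx
    rw [LinearMap.mem_ker] at hx
    constructor
    · rw [LinearMap.mem_ker, hbl, hx, mul_zero]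
    · rw [LinearMap.mem_ker, hbr, hx, zero_mul]
  · -- elements of ker E satisfy Kishimoto's condition
    intro x hx0 D hD ε hε
    obtain ⟨a, haD, ha0, ha1, y, hy⟩ := hap x D hD (ε/2) (by positivity)
    have hEsand : E (ι a * x * ι a) = 0 := by
      rw [hsand, hx0, mul_zero, zero_mul]
    have hEy : E (ι a * x * ι a - ι y) = -(j y) := by
      rw [map_sub, hEsand, hEι, zero_sub]
    have hynorm : ‖y‖ < ε/2 := by
      calc ‖y‖ = ‖j y‖ := (hjnorm y).symm
      _ = ‖E (ι a * x * ι a - ι y)‖ := by rw [hEy, norm_neg]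
      _ ≤ ‖ι a * x * ι a - ι y‖ := hCCP.1 _
      _ < ε/2 := hy
    refine ⟨a, haD, ha0, ha1, ?_⟩
    calc ‖ι a * x * ι a‖ = ‖(ι a * x * ι a - ι y) + ι y‖ := by rw [sub_add_cancel]
    _ ≤ ‖ι a * x * ι a - ι y‖ + ‖ι y‖ := norm_add_le _ _
    _ < ε/2 + ε/2 := by
        have : ‖ι y‖ < ε/2 := by rw [hinorm]; exact hynorm
        exact add_lt_add hy this
    _ = ε := add_halves ε
  · -- maximality
    intro S hSbi hSk x hxS
    have hTbi : IsSubBimodule j (Submodule.map E S) := by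
      rintro a y ⟨x', hx'S, rfl⟩
      exact ⟨⟨ι a * x', (hSbi a x' hx'S).1, hbl a x'⟩,
        ⟨x' * ι a, (hSbi a x' hx'S).2, hbr a x'⟩⟩
    have hTk : ∀ y ∈ Submodule.map E S, KishimotoElem j y := by
      rintro y ⟨x', hx'S, rfl⟩ D hD ε hε
      obtain ⟨a, haD, ha0, ha1, hlt⟩ := hSk x' hx'S D hD ε hε
      refine ⟨a, haD, ha0, ha1, ?_⟩
      calc ‖j a * E x' * j a‖ = ‖E (ι a * x' * ι a)‖ := by rw [hsand]
      _ ≤ ‖ι a * x' * ι a‖ := hCCP.1 _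
      _ < ε := hlt
    have hbot := hanti (Submodule.map E S) hTbi hTk
    have hmem : E x ∈ Submodule.map E S := ⟨x, hxS, rfl⟩
    rw [hbot, Submodule.mem_bot] at hmem
    exact LinearMap.mem_ker.mpr hmem
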